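/- Let $B, W$ be finite sets with $|B| = |W| = N \ge 1$, and suppose a partition $\{W_\alpha\}_{\alpha \in A}$ of $W$ has all blocks of the same size $\bar n$ (so $\bar n \mid N$). Let $\bar f : B \times W \to [0,\infty)$ be row-normalized ($\sum_y \bar f(x,y) = 1$ for all $x$) and constant on blocks in the second variable. Then $Z(\bar f)^{1/N} \le \left(\frac{\bar n!}{\bar n^{\bar n}}\right)^{1/\bar n}$. -/
import Mathlib


open Finset

lemma descFactorial_le_fact (n k : ℕ) : n.descFactorial k ≤ n.factorial := by
  rcases le_or_gt k n with h | h
  · calc n.descFactorial k ≤ (n-k).factorial * n.descFactorial k :=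
        Nat.le_mul_of_pos_left _ (Nat.factorial_pos _)
      _ = n.factorial := Nat.factorial_mul_descFactorial h
  · simp [Nat.descFactorial_of_lt h]

lemma fiber_card_le {B W A : Type*} [Fintype B] [Fintype W] [Fintype A]
    [DecidableEq B] [DecidableEq W] [DecidableEq A]
    (nbar : ℕ) (π : W → A) (hsize : ∀ α, (univ.filter fun y => π y = α).card = nbar)
    (τ : B → A) :
    (univ.filter fun σ : B ≃ W => (fun x => π (σ x)) = τ).card
      ≤ nbar.factorial ^ Fintype.card A := by
  rw [← Fintype.card_subtype]
  have key : Function.Injective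
      (fun (σh : {σ : B ≃ W // (fun x => π (σ x)) = τ}) =>
        (fun α : A => (⟨fun x : {x : B // τ x = α} => ⟨σh.1 x.1, by
            rw [congrFun σh.2 x.1]; exact x.2⟩,
          fun a b hab => Subtype.ext (σh.1.injective (congrArg Subtype.val hab))⟩ :
            {x : B // τ x = α} ↪ {y : W // π y = α}))) := by
    rintro ⟨σ₁, h₁⟩ ⟨σ₂, h₂⟩ h
    ext x
    have h2 := congrFun h (τ x)
    exact congrArg Subtype.val (DFunLike.congr_fun h2 ⟨x, rfl⟩)
  calc Fintype.card {σ : B ≃ W // (fun x => π (σ x)) = τ}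
      ≤ Fintype.card (∀ α : A, {x : B // τ x = α} ↪ {y : W // π y = α}) :=
        Fintype.card_le_of_injective _ key
    _ = ∏ α : A, Fintype.card ({x : B // τ x = α} ↪ {y : W // π y = α}) :=
        Fintype.card_pi
    _ ≤ ∏ _α : A, nbar.factorial := by
        apply Finset.prod_le_prod (fun _ _ => Nat.zero_le _)
        intro α _
        rw [Fintype.card_embedding_eq, Fintype.card_subtype, hsize α]
        exact descFactorial_le_fact _ _
    _ = nbar.factorial ^ Fintype.card A := by simp [Finset.prod_const]

theorem Z_root_paradigm' {B W A : Type*} [Fintype B] [Fintype W] [Fintype A]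
    [DecidableEq B] [DecidableEq W] [DecidableEq A]
    (N nbar : ℕ) (hN : 1 ≤ N) (hnbar : 1 ≤ nbar)
    (hB : Fintype.card B = N) (hW : Fintype.card W = N)
    (π : W → A) (hπ : Function.Surjective π)
    (hsize : ∀ α, (univ.filter fun y => π y = α).card = nbar)
    (fbar : B → W → ℝ) (hf : ∀ x y, 0 ≤ fbar x y)
    (hrow : ∀ x, ∑ y, fbar x y = 1)
    (hconst : ∀ x y y', π y = π y' → fbar x y = fbar x y') :
    ((∑ σ : B ≃ W, ∏ x, fbar x (σ x)) : ℝ) ^ ((1 : ℝ) / N)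
      ≤ ((nbar.factorial : ℝ) / (nbar : ℝ) ^ nbar) ^ ((1 : ℝ) / nbar) := by
  classical
  set a := Fintype.card A with ha
  have hnpos : (0:ℝ) < nbar := by exact_mod_cast hnbar
  -- section of π and block values
  set s : A → W := Function.surjInv hπ with hs
  set g : B → A → ℝ := fun x α => fbar x (s α) with hgdef
  have hg : ∀ x y, fbar x y = g x (π y) := by
    intro x y
    exact hconst x y (s (π y)) (Function.surjInv_eq hπ (π y)).symm
  have hg0 : ∀ x α, 0 ≤ g x α := fun x α => hf x (s α)
  -- row sums of g
  have hsumg : ∀ x, ∑ α, g x α = 1 / nbar := by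
    intro x
    have h1 : ∑ y, g x (π y) = 1 := by rw [← hrow x]; exact Finset.sum_congr rfl fun y _ => (hg x y).symm
    rw [← Finset.sum_fiberwise' univ π (g x)] at h1
    have h2 : ∑ α, (nbar : ℝ) * g x α = 1 := by
      rw [← h1]
      refine Finset.sum_congr rfl fun α _ => ?_
      rw [Finset.sum_const, hsize α, nsmul_eq_mul]
    rw [eq_div_iff hnpos.ne', Finset.sum_mul, ← h2]
    exact Finset.sum_congr rfl fun α _ => mul_comm _ _
  -- N = a * nbar
  have haN : a * nbar = N := by
    have := Finset.card_eq_sum_card_fiberwise (fun (y : W) (_ : y ∈ univ) => Finset.mem_univ (π y))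
    rw [Finset.card_univ, hW] at this
    rw [ha, this]
    rw [Finset.sum_congr rfl fun α _ => hsize α, Finset.sum_const, Finset.card_univ, smul_eq_mul]
  have hapos : 0 < a := by
    by_contra h
    push_neg at h
    interval_cases a
    omega
  -- rewrite Z via fibers over τ : B → A
  set F : (B → A) → ℝ := fun τ => ∏ x, g x (τ x) with hF
  have hF0 : ∀ τ, 0 ≤ F τ := fun τ => Finset.prod_nonneg fun x _ => hg0 x (τ x)
  have hZ1 : (∑ σ : B ≃ W, ∏ x, fbar x (σ x))
      = ∑ τ : B → A, ((univ.filter fun σ : B ≃ W => (fun x => π (σ x)) = τ).card : ℝ) * F τ := by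
    have key := Finset.sum_fiberwise' (univ : Finset (B ≃ W)) (fun σ => fun x => π (σ x)) F
    calc (∑ σ : B ≃ W, ∏ x, fbar x (σ x))
        = ∑ σ : B ≃ W, F (fun x => π (σ x)) :=
          Finset.sum_congr rfl fun σ _ => Finset.prod_congr rfl fun x _ => hg x (σ x)
      _ = ∑ τ : B → A, ∑ _σ ∈ univ.filter (fun σ : B ≃ W => (fun x => π (σ x)) = τ), F τ :=
          key.symm
      _ = ∑ τ : B → A, ((univ.filter fun σ : B ≃ W => (fun x => π (σ x)) = τ).card : ℝ) * F τ :=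
          Finset.sum_congr rfl fun τ _ => by rw [Finset.sum_const, nsmul_eq_mul]
  have hZ2 : (∑ σ : B ≃ W, ∏ x, fbar x (σ x))
      ≤ ((nbar.factorial ^ a : ℕ) : ℝ) * ∑ τ : B → A, F τ := by
    rw [hZ1, Finset.mul_sum]
    refine Finset.sum_le_sum fun τ _ => ?_
    refine mul_le_mul_of_nonneg_right ?_ (hF0 τ)
    exact_mod_cast fiber_card_le nbar π hsize τ
  have hsum : ∑ τ : B → A, F τ = (1 / nbar : ℝ) ^ N := by
    rw [← Fintype.prod_sum (fun (x : B) (α : A) => g x α)]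
    rw [Finset.prod_congr rfl fun x _ => hsumg x, Finset.prod_const, Finset.card_univ, hB]
  -- assemble: Z ≤ c ^ a
  set c : ℝ := (nbar.factorial : ℝ) / (nbar : ℝ) ^ nbar with hc
  have hc0 : 0 ≤ c := by positivity
  have hbound : (∑ σ : B ≃ W, ∏ x, fbar x (σ x)) ≤ c ^ a := by
    refine hZ2.trans_eq ?_
    rw [hsum, hc]
    have hnN : ((nbar:ℝ)) ^ N = ((nbar:ℝ) ^ nbar) ^ a := by rw [← pow_mul, mul_comm, haN]
    push_cast
    rw [div_pow, div_pow, one_pow, hnN]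
    ring
  have hZ0 : 0 ≤ ∑ σ : B ≃ W, ∏ x, fbar x (σ x) :=
    Finset.sum_nonneg fun σ _ => Finset.prod_nonneg fun x _ => hf x (σ x)
  have hNpos : (0:ℝ) < N := by exact_mod_cast hN
  calc (∑ σ : B ≃ W, ∏ x, fbar x (σ x)) ^ ((1:ℝ)/N)
      ≤ (c ^ a) ^ ((1:ℝ)/N) :=
        Real.rpow_le_rpow hZ0 hbound (by positivity)
    _ = c ^ ((a:ℝ) * (1/N)) := by
        rw [← Real.rpow_natCast c a, ← Real.rpow_mul hc0]
    _ = c ^ ((1:ℝ)/nbar) := by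
        congr 1
        rw [mul_one_div]
        rw [← haN]
        push_cast
        field_simp


/-- The partition function: sum over bijections `σ : B ≃ W` of the product of weights. -/
noncomputable def Z {B W : Type*} [Fintype B] [Fintype W] [DecidableEq B] [DecidableEq W]
    (f : B → W → ℝ) : ℝ :=
  ∑ σ : B ≃ W, ∏ x, f x (σ x)

/-- Paradigm case: if all blocks of the partition of `W` (fibers of a surjection
`π : W → A`) have the same size `n̄`, and `f̄` is nonnegative, row-normalized and
block-constant in the second variable, then `Z(f̄)^(1/N) ≤ (n̄!/n̄^n̄)^(1/n̄)`. -/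
theorem Z_root_paradigm {B W A : Type*} [Fintype B] [Fintype W] [Fintype A]
    [DecidableEq B] [DecidableEq W] [DecidableEq A]
    (N nbar : ℕ) (hN : 1 ≤ N) (hnbar : 1 ≤ nbar)
    (hB : Fintype.card B = N) (hW : Fintype.card W = N)
    (π : W → A) (hπ : Function.Surjective π)
    (hsize : ∀ α, (univ.filter fun y => π y = α).card = nbar)
    (fbar : B → W → ℝ) (hf : ∀ x y, 0 ≤ fbar x y)
    (hrow : ∀ x, ∑ y, fbar x y = 1)
    (hconst : ∀ x y y', π y = π y' → fbar x y = fbar x y') :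
    (Z fbar) ^ ((1 : ℝ) / N)
      ≤ ((nbar.factorial : ℝ) / (nbar : ℝ) ^ nbar) ^ ((1 : ℝ) / nbar) := by
  exact Z_root_paradigm' N nbar hN hnbar hB hW π hπ hsize fbar hf hrow hconst
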